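/- Let 0 < α ≤ 2 and let L₁ ≥ L₂ ≥ L₃ > 0 be real numbers. Set D = √(L₁² + L₂² + L₃²) and d = L₃. Then (4π²/L₁² + π²/L₂² + π²/L₃²)^{α/2} − (π²/L₁² + π²/L₂² + π²/L₃²)^{α/2} ≥ (4π²/D² + 2π²/d²)^{α/2} − (π²/D² + 2π²/d²)^{α/2}. -/

import Mathlib

open Real

/-- Bernoulli-type tangent line bound for concave rpow. -/
lemma bern_rpow (t x y : ℝ) (ht : 0 ≤ t) (ht1 : t ≤ 1) (hy : 0 < y) (hx : 0 ≤ x) :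
    x ^ t ≤ y ^ t + t * y ^ (t - 1) * (x - y) := by
  have h0 : (-1 : ℝ) ≤ x / y - 1 := by
    have : 0 ≤ x / y := div_nonneg hx hy.le
    linarith
  have h := rpow_one_add_le_one_add_mul_self h0 ht ht1
  have he : 1 + (x / y - 1) = x / y := by ring
  rw [he] at h
  have h2 : y ^ t * (x / y) ^ t ≤ y ^ t * (1 + t * (x / y - 1)) :=
    mul_le_mul_of_nonneg_left h (Real.rpow_nonneg hy.le t)
  have h3 : y ^ t * (x / y) ^ t = x ^ t := by
    rw [← Real.mul_rpow hy.le (div_nonneg hx hy.le), mul_div_cancel₀ _ hy.ne']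
  have h4 : y ^ t * (1 + t * (x / y - 1)) = y ^ t + t * y ^ (t - 1) * (x - y) := by
    rw [Real.rpow_sub hy t 1, Real.rpow_one]
    field_simp
  rw [h3, h4] at h2
  exact h2

/-- Abstract comparison lemma for fractional gaps. -/
lemma gap_compare (t vL vR Q R : ℝ) (ht : 0 < t) (ht1 : t ≤ 1)
    (hvL : 0 < vL) (hvR : 0 < vR) (hR : 0 < R) (hRQ : R ≤ Q)
    (hkey : R * (vL + Q) ≤ Q * vR) :
    (vR + R) ^ t - vR ^ t ≤ (vL + Q) ^ t - vL ^ t := by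
  set uL := vL + Q with huL_def
  set uR := vR + R with huR_def
  have hQ : 0 < Q := lt_of_lt_of_le hR hRQ
  have huL : 0 < uL := by positivity
  have huR : 0 < uR := by positivity
  -- upper bound for RHS gap
  have h2 : uR ^ t - vR ^ t ≤ t * vR ^ (t - 1) * R := by
    have := bern_rpow t uR vR ht.le ht1 hvR huR.le
    have he : uR - vR = R := by rw [huR_def]; ring
    rw [he] at this
    linarith
  -- lower bound for LHS gap
  have h1 : t * uL ^ (t - 1) * Q ≤ uL ^ t - vL ^ t := by
    have := bern_rpow t vL uL ht.le ht1 huL hvL.le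
    have he : t * uL ^ (t - 1) * (vL - uL) = -(t * uL ^ (t - 1) * Q) := by
      rw [huL_def]; ring
    rw [he] at this
    linarith
  -- middle comparison: R * uL^(1-t) ≤ Q * vR^(1-t)
  have hmid : R * uL ^ (1 - t) ≤ Q * vR ^ (1 - t) := by
    rcases le_or_gt uL vR with hc | hc
    · exact mul_le_mul hRQ (Real.rpow_le_rpow huL.le hc (by linarith))
        (Real.rpow_nonneg huL.le _) hQ.le
    · have e1 : uL ^ (1 - t) = uL * uL ^ (-t) := by
        rw [show (1:ℝ) - t = 1 + -t by ring, Real.rpow_add huL, Real.rpow_one]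
      have e2 : vR ^ (1 - t) = vR * vR ^ (-t) := by
        rw [show (1:ℝ) - t = 1 + -t by ring, Real.rpow_add hvR, Real.rpow_one]
      have hmono : uL ^ (-t) ≤ vR ^ (-t) :=
        Real.rpow_le_rpow_of_nonpos hvR hc.le (by linarith)
      calc R * uL ^ (1 - t) = R * uL * uL ^ (-t) := by rw [e1]; ring
        _ ≤ Q * vR * uL ^ (-t) :=
            mul_le_mul_of_nonneg_right hkey (Real.rpow_nonneg huL.le _)
        _ ≤ Q * vR * vR ^ (-t) :=
            mul_le_mul_of_nonneg_left hmono (by positivity)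
        _ = Q * vR ^ (1 - t) := by rw [e2]; ring
  -- convert to: t * vR^(t-1) * R ≤ t * uL^(t-1) * Q
  have h3 : t * vR ^ (t - 1) * R ≤ t * uL ^ (t - 1) * Q := by
    have euL : uL ^ (t - 1) = (uL ^ (1 - t))⁻¹ := by
      rw [← Real.rpow_neg huL.le]; norm_num
    have evR : vR ^ (t - 1) = (vR ^ (1 - t))⁻¹ := by
      rw [← Real.rpow_neg hvR.le]; norm_num
    have hpuL : 0 < uL ^ (1 - t) := Real.rpow_pos_of_pos huL _
    have hpvR : 0 < vR ^ (1 - t) := Real.rpow_pos_of_pos hvR _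
    have : R / vR ^ (1 - t) ≤ Q / uL ^ (1 - t) := by
      rw [div_le_div_iff₀ hpvR hpuL]
      exact hmid
    have hfin : vR ^ (t - 1) * R ≤ uL ^ (t - 1) * Q := by
      rw [euL, evR, inv_mul_eq_div, inv_mul_eq_div]
      exact this
    calc t * vR ^ (t - 1) * R = t * (vR ^ (t - 1) * R) := by ring
      _ ≤ t * (uL ^ (t - 1) * Q) := mul_le_mul_of_nonneg_left hfin ht.le
      _ = t * uL ^ (t - 1) * Q := by ring
  linarith

set_option maxHeartbeats 1000000 in
theorem gap_box_3d_reduction (α L₁ L₂ L₃ : ℝ) (hα : 0 < α) (hα2 : α ≤ 2)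
    (hL₃ : 0 < L₃) (hL32 : L₃ ≤ L₂) (hL21 : L₂ ≤ L₁)
    (D d : ℝ) (hD : D = Real.sqrt (L₁ ^ 2 + L₂ ^ 2 + L₃ ^ 2)) (hd : d = L₃) :
    (4 * π ^ 2 / L₁ ^ 2 + π ^ 2 / L₂ ^ 2 + π ^ 2 / L₃ ^ 2) ^ (α / 2)
        - (π ^ 2 / L₁ ^ 2 + π ^ 2 / L₂ ^ 2 + π ^ 2 / L₃ ^ 2) ^ (α / 2)
      ≥ (4 * π ^ 2 / D ^ 2 + 2 * π ^ 2 / d ^ 2) ^ (α / 2)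
        - (π ^ 2 / D ^ 2 + 2 * π ^ 2 / d ^ 2) ^ (α / 2) := by
  rw [hd]
  have hπ := Real.pi_pos
  have hL2 : 0 < L₂ := lt_of_lt_of_le hL₃ hL32
  have hL1 : 0 < L₁ := lt_of_lt_of_le hL2 hL21
  have hDsq : D ^ 2 = L₁ ^ 2 + L₂ ^ 2 + L₃ ^ 2 := by
    rw [hD, sq_sqrt (by positivity)]
  have hDpos : 0 < D := by
    rw [hD]; exact Real.sqrt_pos.mpr (by positivity)
  have ht : 0 < α / 2 := by linarith
  have ht1 : α / 2 ≤ 1 := by linarith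
  have hvL : 0 < π ^ 2 / L₁ ^ 2 + π ^ 2 / L₂ ^ 2 + π ^ 2 / L₃ ^ 2 := by positivity
  have hvR : 0 < π ^ 2 / D ^ 2 + 2 * π ^ 2 / L₃ ^ 2 := by positivity
  have hR : 0 < 3 * π ^ 2 / D ^ 2 := by positivity
  have hL1D : L₁ ^ 2 ≤ D ^ 2 := by nlinarith [sq_nonneg L₂, sq_nonneg L₃]
  have h32 : L₃ ^ 2 ≤ L₂ ^ 2 := by nlinarith
  have hRQ : 3 * π ^ 2 / D ^ 2 ≤ 3 * π ^ 2 / L₁ ^ 2 := by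
    rw [div_le_div_iff₀ (by positivity) (by positivity)]
    nlinarith [mul_le_mul_of_nonneg_left hL1D (by positivity : (0:ℝ) ≤ 3 * π ^ 2)]
  have hclean : L₂ ^ 2 * L₃ ^ 2 + L₁ ^ 2 * L₃ ^ 2 ≤ L₁ ^ 2 * L₂ ^ 2 + 2 * (L₂ ^ 2 * L₂ ^ 2) := by
    nlinarith [mul_le_mul_of_nonneg_left h32 (sq_nonneg L₁), mul_le_mul_of_nonneg_left h32 (sq_nonneg L₂)]
  have hkey : 3 * π ^ 2 / D ^ 2 *
      ((π ^ 2 / L₁ ^ 2 + π ^ 2 / L₂ ^ 2 + π ^ 2 / L₃ ^ 2) + 3 * π ^ 2 / L₁ ^ 2)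
      ≤ 3 * π ^ 2 / L₁ ^ 2 * (π ^ 2 / D ^ 2 + 2 * π ^ 2 / L₃ ^ 2) := by
    rw [hDsq]
    have hS : (0:ℝ) < L₁ ^ 2 + L₂ ^ 2 + L₃ ^ 2 := by positivity
    have e1 : 3 * π ^ 2 / (L₁ ^ 2 + L₂ ^ 2 + L₃ ^ 2) *
        ((π ^ 2 / L₁ ^ 2 + π ^ 2 / L₂ ^ 2 + π ^ 2 / L₃ ^ 2) + 3 * π ^ 2 / L₁ ^ 2)
        = (3 * π ^ 4 * (4 * L₂ ^ 2 * L₃ ^ 2 + L₁ ^ 2 * L₃ ^ 2 + L₁ ^ 2 * L₂ ^ 2))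
          / ((L₁ ^ 2 + L₂ ^ 2 + L₃ ^ 2) * (L₁ ^ 2 * L₂ ^ 2 * L₃ ^ 2)) := by
      field_simp
      ring
    have e2 : 3 * π ^ 2 / L₁ ^ 2 *
        (π ^ 2 / (L₁ ^ 2 + L₂ ^ 2 + L₃ ^ 2) + 2 * π ^ 2 / L₃ ^ 2)
        = (3 * π ^ 4 * (L₃ ^ 2 + 2 * (L₁ ^ 2 + L₂ ^ 2 + L₃ ^ 2)))
          / (L₁ ^ 2 * ((L₁ ^ 2 + L₂ ^ 2 + L₃ ^ 2) * L₃ ^ 2)) := by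
      field_simp
    rw [e1, e2, div_le_div_iff₀ (by positivity) (by positivity)]
    have hmul := mul_le_mul_of_nonneg_left hclean
      (show (0:ℝ) ≤ 3 * π ^ 4 * ((L₁ ^ 2 + L₂ ^ 2 + L₃ ^ 2) * (L₁ ^ 2 * L₃ ^ 2)) by positivity)
    linarith [hmul]
  have hmain := gap_compare (α / 2)
      (π ^ 2 / L₁ ^ 2 + π ^ 2 / L₂ ^ 2 + π ^ 2 / L₃ ^ 2)
      (π ^ 2 / D ^ 2 + 2 * π ^ 2 / L₃ ^ 2)
      (3 * π ^ 2 / L₁ ^ 2) (3 * π ^ 2 / D ^ 2)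
      ht ht1 hvL hvR hR hRQ hkey
  rw [show (π ^ 2 / L₁ ^ 2 + π ^ 2 / L₂ ^ 2 + π ^ 2 / L₃ ^ 2) + 3 * π ^ 2 / L₁ ^ 2
        = 4 * π ^ 2 / L₁ ^ 2 + π ^ 2 / L₂ ^ 2 + π ^ 2 / L₃ ^ 2 from by ring,
      show (π ^ 2 / D ^ 2 + 2 * π ^ 2 / L₃ ^ 2) + 3 * π ^ 2 / D ^ 2
        = 4 * π ^ 2 / D ^ 2 + 2 * π ^ 2 / L₃ ^ 2 from by ring] at hmain
  exact hmain
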